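/- Let H=(V,F) be a connected finite loopless multigraph, let q∈ℤ_{>0}, and let T be a set of edges on V, disjoint from F, forming a spanning tree of V. Form the multigraph G=(V,F∪T) with weights w(e)=0 and costs c(e)=1 for e∈F, and weights w(e)=1 and costs c(e)=q+1 for e∈T, and budget B=q. Then: (a) for every R⊆F, val(R) = σ(F∖R) − 1, where σ(F∖R) is the number of connected components of (V,F∖R); and (b) max{ val(R) : R⊆F∪T, c(R)≤q } = max{ σ(F∖R) − 1 : R⊆F, |R|≤q }. Hence the maximum components problem on H (remove at most q edges to maximize the number of connected components) reduces to MST interdiction on G with preserved objective values. -/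

import Mathlib

namespace MSTInterdiction

/-- A finite undirected loopless multigraph on vertex type `V` with edge type `E`:
each edge has two distinct endpoints (parallel edges allowed). -/
structure Multigraph (V : Type*) (E : Type*) where
  fst : E → V
  snd : E → V
  loopless : ∀ e, fst e ≠ snd e

variable {V E : Type*}

/-- Adjacency relation using only the edges in `U`. -/
def Multigraph.rel (G : Multigraph V E) (U : Set E) (x y : V) : Prop :=
  ∃ e ∈ U, (G.fst e = x ∧ G.snd e = y) ∨ (G.fst e = y ∧ G.snd e = x)

/-- The graph `(V, U)` is connected. -/
def Multigraph.Connects (G : Multigraph V E) (U : Set E) : Prop :=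
  ∀ x y : V, Relation.EqvGen (G.rel U) x y

/-- `σ(U)`: the number of connected components of `(V, U)`. -/
noncomputable def Multigraph.sigma (G : Multigraph V E) (U : Set E) : ℕ :=
  Nat.card (Quotient (Relation.EqvGen.setoid (G.rel U)))

/-- Total cost (or weight) of a set of edges. -/
noncomputable def setSum (c : E → ℕ) (U : Set E) : ℕ := ∑ᶠ e ∈ U, c e

/-- `val(U)`: the weight of a minimum spanning tree of `(V, E ∖ U)`, i.e. the minimum
of `∑_{e ∈ T} w e` over `T ⊆ E ∖ U` with `(V, T)` connected. -/
noncomputable def Multigraph.val (G : Multigraph V E) (w : E → ℕ) (U : Set E) : ℕ :=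
  sInf {n | ∃ T : Set E, T ⊆ Uᶜ ∧ G.Connects T ∧ setSum w T = n}

/-- `E_{≤ i}`: edges of weight `0` or of weight `2^ℓ` for some natural `ℓ ≤ i`.
In particular `Ele w (-1) = E_{-1}` is the set of edges of weight `0`. -/
def Ele (w : E → ℕ) (i : ℤ) : Set E :=
  {e | w e = 0 ∨ ∃ ℓ : ℕ, (ℓ : ℤ) ≤ i ∧ w e = 2 ^ ℓ}

/-- The connected component of vertex `v` in the graph `(V, S)`. -/
def Multigraph.component (G : Multigraph V E) (S : Set E) (v : V) : Set V :=
  {u | Relation.EqvGen (G.rel S) v u}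

/-- The partition of `V` into the connected components of `(V, S)`. -/
def Multigraph.parts (G : Multigraph V E) (S : Set E) : Set (Set V) :=
  {A | ∃ v : V, A = G.component S v}

/-- Edge `e` has exactly one endpoint in `A`. -/
def Multigraph.oneEnd (G : Multigraph V E) (A : Set V) (e : E) : Prop :=
  (G.fst e ∈ A ∧ G.snd e ∉ A) ∨ (G.fst e ∉ A ∧ G.snd e ∈ A)

/-- Edge `e` has both endpoints in `A`. -/
def Multigraph.twoEnds (G : Multigraph V E) (A : Set V) (e : E) : Prop :=
  G.fst e ∈ A ∧ G.snd e ∈ A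


set_option linter.unusedSectionVars false
set_option linter.unusedVariables false

-- helpers
variable {G : Multigraph V E}

lemma rel_mono {S S' : Set E} (h : S ⊆ S') {x y : V} (hxy : G.rel S x y) : G.rel S' x y := by
  obtain ⟨e, he, h2⟩ := hxy; exact ⟨e, h he, h2⟩

lemma eqvGen_mono {S S' : Set E} (h : S ⊆ S') {x y : V}
    (hxy : Relation.EqvGen (G.rel S) x y) : Relation.EqvGen (G.rel S') x y :=
  Relation.EqvGen.mono (fun _ _ hr => rel_mono h hr) _ _ hxy

/-- The natural surjection between component quotients. -/
noncomputable def qmap (G : Multigraph V E) {S S' : Set E} (h : S ⊆ S') :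
    Quotient (Relation.EqvGen.setoid (G.rel S)) → Quotient (Relation.EqvGen.setoid (G.rel S')) :=
  Quotient.map' id (fun _ _ hr => eqvGen_mono h hr)

lemma qmap_surj {S S' : Set E} (h : S ⊆ S') : Function.Surjective (qmap G h) := by
  rintro ⟨x⟩; exact ⟨Quotient.mk'' x, rfl⟩

lemma sigma_mono [Finite V] {S S' : Set E} (h : S ⊆ S') : G.sigma S' ≤ G.sigma S :=
  Nat.card_le_card_of_surjective _ (qmap_surj h)

instance quotNonempty [Nonempty V] (S : Set E) :
    Nonempty (Quotient (Relation.EqvGen.setoid (G.rel S))) :=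
  Nonempty.map (Quotient.mk _) ‹Nonempty V›

lemma sigma_pos [Finite V] [Nonempty V] (S : Set E) : 0 < G.sigma S :=
  Nat.card_pos

lemma connects_iff [Finite V] [Nonempty V] (S : Set E) : G.Connects S ↔ G.sigma S = 1 := by
  constructor
  · intro h
    rw [Multigraph.sigma, Nat.card_eq_one_iff_unique]
    refine ⟨⟨?_⟩, quotNonempty S⟩
    rintro ⟨x⟩ ⟨y⟩
    exact Quotient.sound (h x y)
  · intro h x y
    rw [Multigraph.sigma, Nat.card_eq_one_iff_unique] at h
    have := h.1
    exact Quotient.exact (Subsingleton.elim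
      (Quotient.mk (Relation.EqvGen.setoid (G.rel S)) x) (Quotient.mk _ y))


lemma eqvGen_insert {S : Set E} {e : E} {a b : V}
    (h : Relation.EqvGen (G.rel (insert e S)) a b) :
    Relation.EqvGen (G.rel S) a b ∨
    (Relation.EqvGen (G.rel S) a (G.fst e) ∧ Relation.EqvGen (G.rel S) (G.snd e) b) ∨
    (Relation.EqvGen (G.rel S) a (G.snd e) ∧ Relation.EqvGen (G.rel S) (G.fst e) b) := by
  induction h with
  | rel x y hxy =>
    obtain ⟨e', he', hor⟩ := hxy
    rcases he' with he' | he'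
    · subst he'
      rcases hor with ⟨h1, h2⟩ | ⟨h1, h2⟩
      · exact Or.inr (Or.inl ⟨h1 ▸ Relation.EqvGen.refl _, h2 ▸ Relation.EqvGen.refl _⟩)
      · exact Or.inr (Or.inr ⟨h2 ▸ Relation.EqvGen.refl _, h1 ▸ Relation.EqvGen.refl _⟩)
    · exact Or.inl (Relation.EqvGen.rel _ _ ⟨e', he', hor⟩)
  | refl x => exact Or.inl (Relation.EqvGen.refl _)
  | symm x y _ ih =>
    rcases ih with h1 | ⟨h1, h2⟩ | ⟨h1, h2⟩
    · exact Or.inl h1.symm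
    · exact Or.inr (Or.inr ⟨h2.symm, h1.symm⟩)
    · exact Or.inr (Or.inl ⟨h2.symm, h1.symm⟩)
  | trans x y z _ _ ih1 ih2 =>
    rcases ih1 with h1 | ⟨h1, h2⟩ | ⟨h1, h2⟩ <;>
      rcases ih2 with g1 | ⟨g1, g2⟩ | ⟨g1, g2⟩
    · exact Or.inl (h1.trans _ _ _ g1)
    · exact Or.inr (Or.inl ⟨h1.trans _ _ _ g1, g2⟩)
    · exact Or.inr (Or.inr ⟨h1.trans _ _ _ g1, g2⟩)
    · exact Or.inr (Or.inl ⟨h1, h2.trans _ _ _ g1⟩)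
    · exact Or.inr (Or.inl ⟨h1, g2⟩)
    · exact Or.inl (h1.trans _ _ _ g2)
    · exact Or.inr (Or.inr ⟨h1, h2.trans _ _ _ g1⟩)
    · exact Or.inl (h1.trans _ _ _ g2)
    · exact Or.inr (Or.inr ⟨h1, g2⟩)

open Classical in
lemma sigma_insert_ge [Finite V] (S : Set E) (e : E) :
    G.sigma S ≤ G.sigma (insert e S) + 1 := by
  set v := G.snd e with hv
  let φ := qmap G (Set.subset_insert e S)
  let ψ : Quotient (Relation.EqvGen.setoid (G.rel S)) →
      Option (Quotient (Relation.EqvGen.setoid (G.rel (insert e S)))) :=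
    fun x => if x = Quotient.mk'' v then none else some (φ x)
  have hinj : Function.Injective ψ := by
    intro x y hxy
    by_cases hx : x = Quotient.mk'' v <;> by_cases hy : y = Quotient.mk'' v
    · rw [hx, hy]
    · simp only [ψ, if_pos hx, if_neg hy] at hxy
      cases hxy
    · simp only [ψ, if_neg hx, if_pos hy] at hxy
      cases hxy
    · simp only [ψ, if_neg hx, if_neg hy, Option.some_inj] at hxy
      obtain ⟨a, rfl⟩ := Quotient.exists_rep x
      obtain ⟨b, rfl⟩ := Quotient.exists_rep y
      have : Relation.EqvGen (G.rel (insert e S)) a b := Quotient.exact hxy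
      rcases eqvGen_insert this with h1 | ⟨h1, h2⟩ | ⟨h1, h2⟩
      · exact Quotient.sound h1
      · exact absurd (Quotient.sound h2.symm : Quotient.mk _ b = _) hy
      · exact absurd (Quotient.sound h1 : Quotient.mk _ a = _) hx
  haveI := Fintype.ofFinite (Quotient (Relation.EqvGen.setoid (G.rel (insert e S))))
  calc G.sigma S ≤ Nat.card (Option (Quotient (Relation.EqvGen.setoid (G.rel (insert e S))))) :=
        Nat.card_le_card_of_injective ψ hinj
    _ = G.sigma (insert e S) + 1 := Finite.card_option

lemma sigma_insert_lt [Finite V] {S : Set E} {e : E}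
    (h : ¬ Relation.EqvGen (G.rel S) (G.fst e) (G.snd e)) :
    G.sigma (insert e S) < G.sigma S := by
  refine lt_of_le_of_ne (sigma_mono (Set.subset_insert e S)) ?_
  intro hc
  have hbij : Function.Bijective (qmap G (Set.subset_insert e S)) :=
    (Nat.bijective_iff_surjective_and_card _).mpr ⟨qmap_surj _, hc.symm⟩
  have he : Relation.EqvGen (G.rel (insert e S)) (G.fst e) (G.snd e) :=
    Relation.EqvGen.rel _ _ ⟨e, Set.mem_insert e S, Or.inl ⟨rfl, rfl⟩⟩
  have : qmap G (Set.subset_insert e S) (Quotient.mk'' (G.fst e))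
      = qmap G (Set.subset_insert e S) (Quotient.mk'' (G.snd e)) := by
    simp only [qmap, Quotient.map'_mk'']
    exact Quotient.sound he
  exact h (Quotient.exact (hbij.1 this))


lemma exists_cross {S U : Set E} {x y : V} (h : Relation.EqvGen (G.rel U) x y) :
    Relation.EqvGen (G.rel S) x y ∨
      ∃ e ∈ U, ¬ Relation.EqvGen (G.rel S) (G.fst e) (G.snd e) := by
  induction h with
  | rel a b hab =>
    by_cases hs : Relation.EqvGen (G.rel S) a b
    · exact Or.inl hs
    · obtain ⟨e, he, hor⟩ := hab
      refine Or.inr ⟨e, he, ?_⟩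
      intro hc
      rcases hor with ⟨h1, h2⟩ | ⟨h1, h2⟩
      · rw [← h1, ← h2] at hs; exact hs hc
      · rw [← h2, ← h1] at hs; exact hs hc.symm
  | refl a => exact Or.inl (Relation.EqvGen.refl _)
  | symm a b _ ih =>
    rcases ih with h | h
    exacts [Or.inl h.symm, Or.inr h]
  | trans a b cc _ _ ih1 ih2 =>
    rcases ih1 with h1 | h1
    · rcases ih2 with h2 | h2
      · exact Or.inl (h1.trans _ _ _ h2)
      · exact Or.inr h2
    · exact Or.inr h1

lemma sigma_union_le [Finite V] (S : Set E) {M : Set E} (hM : M.Finite) :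
    G.sigma S ≤ G.sigma (S ∪ M) + M.ncard := by
  refine Set.Finite.induction_on (motive := fun M _ => G.sigma S ≤ G.sigma (S ∪ M) + M.ncard)
    M hM (by simp) ?_
  intro e M' heM' hM' ih
  have h1 : S ∪ insert e M' = insert e (S ∪ M') := by
    rw [Set.union_insert]
  rw [h1, Set.ncard_insert_of_notMem heM' hM']
  calc G.sigma S ≤ G.sigma (S ∪ M') + M'.ncard := ih
    _ ≤ (G.sigma (insert e (S ∪ M')) + 1) + M'.ncard :=
        Nat.add_le_add_right (sigma_insert_ge (S ∪ M') e) _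
    _ = G.sigma (insert e (S ∪ M')) + (M'.ncard + 1) := by ring

lemma exists_connect [Finite V] [Nonempty V] {TE : Set E} (hT : G.Connects TE) (S : Set E) :
    ∃ M : Set E, M ⊆ TE ∧ M.Finite ∧ M.ncard + 1 ≤ G.sigma S ∧ G.Connects (S ∪ M) := by
  suffices H : ∀ n (S : Set E), G.sigma S = n →
      ∃ M : Set E, M ⊆ TE ∧ M.Finite ∧ M.ncard + 1 ≤ G.sigma S ∧ G.Connects (S ∪ M) from
    H _ S rfl
  intro n
  induction n using Nat.strong_induction_on with
  | _ n ih =>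
  intro S hn
  by_cases hconn : G.Connects S
  · refine ⟨∅, by simp, Set.finite_empty, ?_, by simpa⟩
    simpa using Nat.one_le_iff_ne_zero.mpr (sigma_pos (G := G) S).ne'
  · obtain ⟨x, hx⟩ := not_forall.mp hconn
    obtain ⟨y, hy⟩ := not_forall.mp hx
    rcases exists_cross (S := S) (hT x y) with h | ⟨e, heT, he⟩
    · exact absurd h hy
    · have hlt : G.sigma (insert e S) < n := hn ▸ sigma_insert_lt he
      obtain ⟨M', hM'T, hM'fin, hM'card, hM'conn⟩ := ih _ hlt (insert e S) rfl
      refine ⟨insert e M', Set.insert_subset heT hM'T, hM'fin.insert e, ?_, ?_⟩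
      · calc (insert e M').ncard + 1 ≤ (M'.ncard + 1) + 1 :=
              Nat.add_le_add_right (Set.ncard_insert_le e M') 1
          _ ≤ G.sigma (insert e S) + 1 := Nat.add_le_add_right hM'card 1
          _ ≤ G.sigma S := hn ▸ hlt
      · have h1 : S ∪ insert e M' = insert e S ∪ M' := by
          rw [Set.union_insert, Set.insert_union]
        rw [h1]; exact hM'conn


lemma setSum_eq_ncard {c : E → ℕ} {U : Set E} (hU : U.Finite) (h : ∀ e ∈ U, c e = 1) :
    setSum c U = U.ncard := by
  rw [setSum, finsum_mem_eq_finite_toFinset_sum _ hU]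
  rw [Finset.sum_congr rfl (fun e he => h e (hU.mem_toFinset.mp he))]
  simp [Set.ncard_eq_toFinset_card U hU]

lemma le_setSum {c : E → ℕ} {U : Set E} (hU : U.Finite) {e : E} (he : e ∈ U) :
    c e ≤ setSum c U := by
  rw [setSum, finsum_mem_eq_finite_toFinset_sum _ hU]
  exact Finset.single_le_sum (fun _ _ => Nat.zero_le _) (hU.mem_toFinset.mpr he)

section Main

variable {V F T : Type*} [Fintype V] [Nonempty V] [Fintype F] [Fintype T]

lemma support_w (G : Multigraph V (F ⊕ T)) (w : F ⊕ T → ℕ)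
    (hwF : ∀ f : F, w (Sum.inl f) = 0) (hwT : ∀ t : T, w (Sum.inr t) = 1) :
    Function.support w = Set.range Sum.inr := by
  ext e
  cases e with
  | inl f => simp [Function.mem_support, hwF f]
  | inr t => simp [Function.mem_support, hwT t]

lemma val_eq (G : Multigraph V (F ⊕ T))
    (hTconn : G.Connects (Set.range Sum.inr))
    (w : F ⊕ T → ℕ) (hwF : ∀ f : F, w (Sum.inl f) = 0) (hwT : ∀ t : T, w (Sum.inr t) = 1)
    (R : Set (F ⊕ T)) (hR : R ⊆ Set.range Sum.inl) :
    G.val w R = G.sigma (Set.range Sum.inl \ R) - 1 := by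
  set FE : Set (F ⊕ T) := Set.range Sum.inl with hFE
  set TE : Set (F ⊕ T) := Set.range Sum.inr with hTE
  have hdisj : ∀ e ∈ TE, e ∉ R := by
    rintro e ⟨t, rfl⟩ heR
    obtain ⟨f, hf⟩ := hR heR
    exact Sum.inl_ne_inr hf
  have hwU : ∀ U : Set (F ⊕ T), setSum w U = (U ∩ TE).ncard := by
    intro U
    have hs : Function.support w = TE := support_w G w hwF hwT
    have h1 : setSum w U = setSum w (U ∩ TE) := by
      rw [setSum, setSum, ← finsum_mem_inter_support w U, hs]
    rw [h1]
    exact setSum_eq_ncard (Set.toFinite _) (fun e he => by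
      obtain ⟨t, rfl⟩ := he.2; exact hwT t)
  -- the witness
  obtain ⟨M, hMT, hMfin, hMcard, hMconn⟩ := exists_connect hTconn (FE \ R)
  have hUsub : (FE \ R) ∪ M ⊆ Rᶜ := by
    rintro e (he | he)
    · exact he.2
    · exact hdisj e (hMT he)
  have hUM : ((FE \ R) ∪ M) ∩ TE = M := by
    apply Set.Subset.antisymm
    · rintro e ⟨he1 | he1, he2⟩
      · obtain ⟨f, hf⟩ := he1.1
        obtain ⟨t, ht⟩ := he2
        rw [← hf] at ht; cases ht
      · exact he1
    · exact fun e he => ⟨Or.inr he, hMT he⟩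
  have hmem : M.ncard ∈ {n | ∃ T' : Set (F ⊕ T), T' ⊆ Rᶜ ∧ G.Connects T' ∧ setSum w T' = n} :=
    ⟨(FE \ R) ∪ M, hUsub, hMconn, by rw [hwU, hUM]⟩
  -- lower bound
  have hlb : ∀ n ∈ {n | ∃ T' : Set (F ⊕ T), T' ⊆ Rᶜ ∧ G.Connects T' ∧ setSum w T' = n},
      G.sigma (FE \ R) - 1 ≤ n := by
    rintro n ⟨U, hU, hUconn, rfl⟩
    rw [hwU]
    have hsub : U ⊆ (FE \ R) ∪ (U ∩ TE) := by
      intro e he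
      rcases e with f | t
      · exact Or.inl ⟨⟨f, rfl⟩, hU he⟩
      · exact Or.inr ⟨he, ⟨t, rfl⟩⟩
    have h1 : G.sigma ((FE \ R) ∪ (U ∩ TE)) ≤ 1 := by
      calc G.sigma ((FE \ R) ∪ (U ∩ TE)) ≤ G.sigma U := sigma_mono hsub
        _ = 1 := (connects_iff U).mp hUconn
    have h2 := sigma_union_le (G := G) (FE \ R) (Set.toFinite (U ∩ TE))
    omega
  rw [Multigraph.val]
  refine le_antisymm ?_ (le_csInf ⟨_, hmem⟩ hlb)
  have := hlb _ hmem
  have h3 : M.ncard = G.sigma (FE \ R) - 1 := le_antisymm (by omega) this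
  exact h3 ▸ Nat.sInf_le hmem

end Main

/-- Reduction of the maximum components problem to MST interdiction.
`H = (V, F)` is a connected loopless multigraph and `T` a spanning tree on `V` disjoint
from `F` (the combined edge set is modeled as the sum type `F ⊕ T`). In the multigraph
`G = (V, F ∪ T)` with weights `0`/costs `1` on `F` and weights `1`/costs `q+1` on `T`,
and budget `B = q`: (a) `val(R) = σ(F∖R) − 1` for every `R ⊆ F`; and (b) the optimal
MST interdiction value equals the optimal value of the maximum components problem on
`H` with at most `q` removals. -/
theorem mcp_reduction
    {V F T : Type*} [Fintype V] [Nonempty V] [Fintype F] [Fintype T]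
    (G : Multigraph V (F ⊕ T)) (q : ℕ) (hq : 0 < q)
    (hHconn : G.Connects (Set.range Sum.inl))
    (hTconn : G.Connects (Set.range Sum.inr))
    (hTcard : Fintype.card T = Fintype.card V - 1)
    (w : F ⊕ T → ℕ) (hwF : ∀ f : F, w (Sum.inl f) = 0) (hwT : ∀ t : T, w (Sum.inr t) = 1)
    (c : F ⊕ T → ℕ) (hcF : ∀ f : F, c (Sum.inl f) = 1) (hcT : ∀ t : T, c (Sum.inr t) = q + 1) :
    (∀ R : Set (F ⊕ T), R ⊆ Set.range Sum.inl →
      G.val w R = G.sigma (Set.range Sum.inl \ R) - 1) ∧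
    sSup {n : ℕ | ∃ R : Set (F ⊕ T), setSum c R ≤ q ∧ G.val w R = n}
      = sSup {n : ℕ | ∃ R : Set (F ⊕ T), R ⊆ Set.range Sum.inl ∧ Nat.card R ≤ q ∧
          G.sigma (Set.range Sum.inl \ R) - 1 = n} := by
  constructor
  · exact fun R hR => val_eq G hTconn w hwF hwT R hR
  · have hcR : ∀ R : Set (F ⊕ T), R ⊆ Set.range Sum.inl → setSum c R = R.ncard := by
      intro R hRF
      exact setSum_eq_ncard (Set.toFinite R) (fun e he => by
        obtain ⟨f, hf⟩ := hRF he; rw [← hf, hcF])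
    have hseteq : {n : ℕ | ∃ R : Set (F ⊕ T), setSum c R ≤ q ∧ G.val w R = n}
        = {n : ℕ | ∃ R : Set (F ⊕ T), R ⊆ Set.range Sum.inl ∧ Nat.card R ≤ q ∧
            G.sigma (Set.range Sum.inl \ R) - 1 = n} := by
      ext n
      constructor
      · rintro ⟨R, hRc, rfl⟩
        have hRF : R ⊆ Set.range Sum.inl := by
          intro e heR
          rcases e with f | t
          · exact ⟨f, rfl⟩
          · exfalso
            have h1 := le_setSum (c := c) (Set.toFinite R) heR
            rw [hcT t] at h1
            omega
        refine ⟨R, hRF, ?_, (val_eq G hTconn w hwF hwT R hRF).symm⟩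
        rw [Nat.card_coe_set_eq, ← hcR R hRF]
        exact hRc
      · rintro ⟨R, hRF, hcard, rfl⟩
        refine ⟨R, ?_, val_eq G hTconn w hwF hwT R hRF⟩
        rw [hcR R hRF, ← Nat.card_coe_set_eq]
        exact hcard
    rw [hseteq]

end MSTInterdiction
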